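/- Let P and Q be real (N+1)×(N+1) matrices with P symmetric positive definite and Q + Qᵀ = −e₀e₀ᵀ + e_N e_Nᵀ (e₀, e_N the first and last standard basis vectors). Let λ ∈ ℂ with Re(λ) ≤ 0, f ∈ ℂ, and suppose U ∈ ℂ^{N+1} satisfies P⁻¹Q U = λU − P⁻¹(U₀ − f)e₀. Then |U_N|² − 2·Re(λ)·U*PU = |f|² − |U₀ − f|². In particular |U_N|² ≤ |f|². -/

import Mathlib

open Matrix

/-- Discrete energy identity for the SBP-SAT time discretization of `u' = λu`
with the initial condition enforced weakly with penalty `σ = −1`. -/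
lemma aux_conj_quad {n : Type*} [Fintype n] (A : Matrix n n ℝ) (U : n → ℂ) :
    star (star U ⬝ᵥ (A.map Complex.ofReal).mulVec U)
      = star U ⬝ᵥ ((Aᵀ.map Complex.ofReal).mulVec U) := by
  simp only [dotProduct, mulVec, Matrix.map_apply, Matrix.transpose_apply, Pi.star_apply,
    Finset.mul_sum, star_sum, star_mul', Complex.star_def, Complex.conj_conj,
    Complex.conj_ofReal]
  rw [Finset.sum_comm]
  refine Finset.sum_congr rfl fun i _ => ?_
  refine Finset.sum_congr rfl fun j _ => ?_
  ring

lemma aux_single {n : Type*} [Fintype n] [DecidableEq n] (i : n) (U : n → ℂ) :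
    star U ⬝ᵥ (((vecMulVec (Pi.single i (1:ℝ)) (Pi.single i 1)).map Complex.ofReal).mulVec U)
      = star (U i) * U i := by
  simp [dotProduct, mulVec, vecMulVec_apply, Matrix.map_apply, Pi.single_apply,
    ite_mul, mul_ite, Finset.mul_sum, apply_ite Complex.ofReal, Finset.sum_ite_eq,
    Finset.sum_ite_eq']

lemma aux_mixed {n : Type*} [Fintype n] [DecidableEq n] (i j : n) (U : n → ℂ) :
    star U ⬝ᵥ (((-vecMulVec (Pi.single i (1:ℝ)) (Pi.single i 1)
        + vecMulVec (Pi.single j 1) (Pi.single j 1)).map Complex.ofReal).mulVec U)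
      = star (U j) * U j - star (U i) * U i := by
  simp only [dotProduct, mulVec, vecMulVec_apply, Matrix.map_apply, Matrix.add_apply,
    Matrix.neg_apply, Pi.single_apply, Pi.star_apply, ite_mul, mul_ite, one_mul, mul_one,
    mul_zero, zero_mul, apply_ite Complex.ofReal, Complex.ofReal_add, Complex.ofReal_neg,
    Complex.ofReal_one, Complex.ofReal_zero, mul_add, mul_neg, add_mul, neg_mul,
    Finset.sum_add_distrib, Finset.sum_neg_distrib, Finset.sum_ite_eq, Finset.sum_ite_eq',
    Finset.mem_univ, if_true, ite_self, Finset.sum_ite_irrel, Finset.sum_const_zero]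
  ring

lemma aux_re_nonneg {n : Type*} [Fintype n] {P : Matrix n n ℝ} (hP : P.PosSemidef) (U : n → ℂ) :
    0 ≤ (star U ⬝ᵥ (P.map Complex.ofReal).mulVec U).re := by
  have hx := hP.dotProduct_mulVec_nonneg (fun i => (U i).re)
  have hy := hP.dotProduct_mulVec_nonneg (fun i => (U i).im)
  simp only [star_trivial, dotProduct, mulVec] at hx hy
  have : (star U ⬝ᵥ (P.map Complex.ofReal).mulVec U).re
      = (∑ i, (U i).re * ∑ j, P i j * (U j).re) + (∑ i, (U i).im * ∑ j, P i j * (U j).im) := by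
    simp only [dotProduct, mulVec, Matrix.map_apply, Pi.star_apply, Complex.star_def,
      Finset.mul_sum, Complex.re_sum]
    rw [← Finset.sum_add_distrib]
    refine Finset.sum_congr rfl fun i _ => ?_
    rw [← Finset.sum_add_distrib]
    refine Finset.sum_congr rfl fun j _ => ?_
    simp only [Complex.mul_re, Complex.mul_im, Complex.ofReal_re, Complex.ofReal_im,
      Complex.conj_re, Complex.conj_im]
    ring
  rw [this]
  exact add_nonneg hx hy

theorem stmt_8 {N : ℕ} (P Q : Matrix (Fin (N + 1)) (Fin (N + 1)) ℝ)
    (hP : P.PosDef) (hPsymm : P.IsSymm)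
    (hQ : Q + Qᵀ = -Matrix.vecMulVec (Pi.single 0 1) (Pi.single 0 1) +
      Matrix.vecMulVec (Pi.single (Fin.last N) 1) (Pi.single (Fin.last N) 1))
    (lam : ℂ) (hlam : lam.re ≤ 0) (f : ℂ) (U : Fin (N + 1) → ℂ)
    (hU : ((P.map Complex.ofReal)⁻¹ * Q.map Complex.ofReal).mulVec U =
      lam • U - ((P.map Complex.ofReal)⁻¹).mulVec ((U 0 - f) • (Pi.single 0 1 : Fin (N + 1) → ℂ))) :
    (‖U (Fin.last N)‖ ^ 2 -
        2 * lam.re * (star U ⬝ᵥ (P.map Complex.ofReal).mulVec U).re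
          = ‖f‖ ^ 2 - ‖U 0 - f‖ ^ 2) ∧
      ‖U (Fin.last N)‖ ^ 2 ≤ ‖f‖ ^ 2 := by
  set Pc := P.map Complex.ofReal with hPcdef
  set Qc := Q.map Complex.ofReal with hQcdef
  have hdet : IsUnit Pc.det := by
    have h1 : Pc.det = (P.det : ℂ) := by
      rw [hPcdef]; exact (RingHom.map_det Complex.ofRealHom P).symm
    rw [h1, isUnit_iff_ne_zero]
    exact_mod_cast hP.det_pos.ne'
  -- Step A
  have hA : Qc.mulVec U = lam • Pc.mulVec U - (U 0 - f) • (Pi.single 0 1 : Fin (N+1) → ℂ) := by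
    have h1 := congrArg (Pc.mulVec) hU
    rw [Matrix.mulVec_mulVec, Matrix.mul_nonsing_inv_cancel_left _ _ hdet,
      Matrix.mulVec_sub, Matrix.mulVec_smul, Matrix.mulVec_mulVec,
      Matrix.mul_nonsing_inv _ hdet, Matrix.one_mulVec] at h1
    exact h1
  set r := star U ⬝ᵥ Pc.mulVec U with hrdef
  set a := U 0
  set b := U (Fin.last N)
  -- Step B
  have hs : star U ⬝ᵥ Qc.mulVec U = lam * r - (a - f) * star a := by
    rw [hA, dotProduct_sub, dotProduct_smul, dotProduct_smul, dotProduct_single,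
      smul_eq_mul, smul_eq_mul]
    simp [mul_comm]
    rfl
  -- r is real
  have hrim : r.im = 0 := by
    have h1 := aux_conj_quad P U
    rw [hPsymm] at h1
    have : (starRingEnd ℂ) r = r := h1
    exact (Complex.conj_eq_iff_im.mp this)
  -- Step C
  have hC : (star U ⬝ᵥ Qc.mulVec U) + star (star U ⬝ᵥ Qc.mulVec U)
      = star b * b - star a * a := by
    rw [aux_conj_quad]
    have hsum : star U ⬝ᵥ Qc.mulVec U + star U ⬝ᵥ ((Qᵀ.map Complex.ofReal).mulVec U)
        = star U ⬝ᵥ (((Q + Qᵀ).map Complex.ofReal).mulVec U) := by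
      rw [Matrix.map_add _ (by simp [Complex.ofReal_add]), Matrix.add_mulVec, dotProduct_add]
    rw [hsum, hQ, aux_mixed]
  rw [hs] at hC
  have hre := congrArg Complex.re hC
  simp only [Complex.add_re, Complex.sub_re, Complex.mul_re, Complex.star_def,
    Complex.conj_re, Complex.conj_im, Complex.sub_im, Complex.mul_im, hrim,
    RingHom.map_sub, RingHom.map_mul, Complex.conj_conj] at hre
  have hn : ∀ z : ℂ, ‖z‖^2 = z.re^2 + z.im^2 := fun z => by
    rw [Complex.sq_norm, Complex.normSq_apply]; ring
  have hr0 : 0 ≤ r.re := aux_re_nonneg hP.posSemidef U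
  constructor
  · rw [hn, hn, hn]
    simp only [Complex.sub_re, Complex.sub_im]
    nlinarith [hre]
  · rw [hn, hn]
    have h2 : 2 * lam.re * r.re ≤ 0 := by nlinarith
    nlinarith [hre, h2, sq_nonneg (a.re - f.re), sq_nonneg (a.im - f.im)]
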